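/- Let the shifted q-derivative centered at 1 be D̃_q f(x) = (f(x) − f(qx + 1 − q))/((1−q)(x−1)) for x ≠ 1, q ≠ 1. For 0 < q < 1 and w(m,u) = a^{log u / log q} (aq; q)_∞ with a = (1−m)/q, one has D̃_{q,m} w(m,u) = w(m,u)(u−m)/((1−q)m(1−m)) for 0 < m < 1 and u ∈ {qⁿ : n ≥ 0}. -/

import Mathlib

lemma multipliable_one_sub_geom {c q : ℝ} (hc0 : 0 ≤ c) (hc1 : c < 1)
    (hq0 : 0 ≤ q) (hq1 : q < 1) :
    Multipliable fun k : ℕ => (1 - c * q ^ k) := by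
  have hpos : ∀ k : ℕ, 0 < 1 - c * q ^ k := by
    intro k
    have h1 : c * q ^ k ≤ c * 1 := by
      apply mul_le_mul_of_nonneg_left _ hc0
      exact pow_le_one₀ hq0 hq1.le
    nlinarith
  have hsum : Summable fun k : ℕ => Real.log (1 - c * q ^ k) := by
    rw [← summable_neg_iff]
    have hnn : ∀ k : ℕ, 0 ≤ -Real.log (1 - c * q ^ k) := by
      intro k
      rw [neg_nonneg]
      apply Real.log_nonpos
      · exact (hpos k).le
      · nlinarith [pow_nonneg hq0 k, hc0]
    have hle : ∀ k : ℕ, -Real.log (1 - c * q ^ k) ≤ (c / (1 - c)) * q ^ k := by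
      intro k
      have hx0 : 0 ≤ c * q ^ k := mul_nonneg hc0 (pow_nonneg hq0 k)
      have hxc : c * q ^ k ≤ c := by nlinarith [pow_le_one₀ hq0 hq1.le (n := k)]
      have h1 : -Real.log (1 - c * q ^ k) = Real.log (1 - c * q ^ k)⁻¹ := by
        rw [Real.log_inv]
      rw [h1]
      have h2 : Real.log (1 - c * q ^ k)⁻¹ ≤ (1 - c * q ^ k)⁻¹ - 1 :=
        Real.log_le_sub_one_of_pos (inv_pos.mpr (hpos k))
      have h3 : (1 - c * q ^ k)⁻¹ - 1 ≤ c / (1 - c) * q ^ k := by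
        have h4 : 0 < 1 - c := by linarith
        have e : (1 - c * q ^ k)⁻¹ - 1 = (c * q ^ k) / (1 - c * q ^ k) := by
          rw [eq_div_iff (ne_of_gt (hpos k)), sub_mul, one_mul,
            inv_mul_cancel₀ (ne_of_gt (hpos k))]
          ring
        have e2 : c / (1 - c) * q ^ k = (c * q ^ k) / (1 - c) := by ring
        rw [e, e2]
        gcongr
      linarith
    have hg : Summable fun k : ℕ => (c / (1 - c)) * q ^ k :=
      Summable.mul_left _ (summable_geometric_of_lt_one hq0 hq1)
    exact Summable.of_nonneg_of_le hnn hle hg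
  exact Real.multipliable_of_summable_log hpos hsum

set_option maxHeartbeats 800000 in
theorem stmt_19 (q m : ℝ) (hq : 0 < q) (hq1 : q < 1)
    (hm : m ∈ Set.Ioo (0:ℝ) 1) (n : ℕ)
    (w : ℝ → ℝ)
    (hw : ∀ m' : ℝ,
      w m' = ((1 - m') / q) ^ n *
        ∏' k : ℕ, (1 - ((1 - m') / q) * q * q ^ (k : ℕ))) :
    (w m - w (q * m + 1 - q)) / ((1 - q) * (m - 1))
      = w m * (q ^ n - m) / ((1 - q) * m * (1 - m)) := by
  obtain ⟨hm0, hm1⟩ := hm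
  set c : ℝ := 1 - m with hc
  have hc0 : 0 < c := by simp [hc]; linarith
  have hc1 : c < 1 := by simp [hc]; linarith
  have hqne : q ≠ 0 := ne_of_gt hq
  have hmul : Multipliable fun k : ℕ => (1 - c * q ^ k) :=
    multipliable_one_sub_geom hc0.le hc1 hq.le hq1
  have hmul' : Multipliable fun k : ℕ => (1 - c * q ^ (k + 1)) := by
    have h := multipliable_one_sub_geom (c := c * q) (q := q)
      (by positivity) (by nlinarith) hq.le hq1
    exact h.congr fun k => by ring
  -- w m
  have hwm : w m = (c / q) ^ n * ((1 - c) * ∏' k : ℕ, (1 - c * q ^ (k + 1))) := by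
    rw [hw m]
    have h1 : (fun k : ℕ => 1 - (1 - m) / q * q * q ^ k) = fun k : ℕ => 1 - c * q ^ k := by
      funext k; field_simp; rw [hc]; ring
    rw [h1, tprod_eq_zero_mul' hmul']
    simp [hc]
  -- w (q*m + 1 - q)
  have hwq : w (q * m + 1 - q) = c ^ n * ∏' k : ℕ, (1 - c * q ^ (k + 1)) := by
    rw [hw (q * m + 1 - q)]
    have h1 : (1 - (q * m + 1 - q)) / q = c := by field_simp; ring
    rw [h1]
    congr 1
    apply tprod_congr
    intro k
    ring_nf
  set P : ℝ := ∏' k : ℕ, (1 - c * q ^ (k + 1)) with hP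
  rw [hwm, hwq]
  have h1c : (1 : ℝ) - c = m := by simp [hc]
  rw [h1c]
  have hcn : c ^ n = (c / q) ^ n * q ^ n := by
    rw [div_pow, div_mul_cancel₀]
    exact pow_ne_zero n hqne
  rw [hcn, hc]
  have hq1' : (1:ℝ) - q ≠ 0 := by linarith
  have hm1' : m - 1 ≠ 0 := by linarith
  have h1m : (1:ℝ) - m ≠ 0 := by linarith
  field_simp
  ring
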